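/- Let Q ∈ ℝ[X_1,…,X_n] be homogeneous of degree d, let N ≥ d, and let p be a probability distribution on [n]. Then the expectation over an N-sample from p of (U_N Q(Φ))² equals ∑_{s ∈ ℕⁿ, max(0, 2d−N) ≤ |s| ≤ d} p^s · ( (∂^{|s|}Q/∂X^s)(p) )² · (N−d)!² / ( N! · (N − 2d + |s|)! · ∏_{i=1}^n s_i! ), where Φ is the fingerprint of the N-sample (the terms with |s| < 2d − N vanish). -/

import Mathlib

open Finset

/-- The fingerprint of a sample tuple: the count of occurrences of each element. -/
def fingerprint {N n : ℕ} (s : Fin N → Fin n) : Fin n → ℕ :=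
  fun i => (Finset.univ.filter fun j => s j = i).card

/-- The unbiased estimator `U_N Q` for a (homogeneous degree-`d`) polynomial `Q`,
evaluated at a fingerprint `φ`. -/
noncomputable def estU {n : ℕ} (N d : ℕ) (Q : MvPolynomial (Fin n) ℝ)
    (φ : Fin n → ℕ) : ℝ :=
  ∑ α ∈ Q.support, Q.coeff α *
    (((N - d).factorial : ℝ) * ∏ i, ((α i).factorial : ℝ)) / (N.factorial : ℝ) *
    ∏ i, ((φ i).choose (α i) : ℝ)

/-- The iterated formal partial derivative `∏ i (∂/∂X_i)^(s i)` applied to `Q`. -/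
noncomputable def iterPderiv {n : ℕ} (s : Fin n → ℕ)
    (Q : MvPolynomial (Fin n) ℝ) : MvPolynomial (Fin n) ℝ :=
  (List.finRange n).foldr
    (fun i acc => (((MvPolynomial.pderiv i).toLinearMap) ^ (s i)) acc) Q

lemma descFactorial_succ_left (x m : ℕ) :
    (x+1).descFactorial m = x.descFactorial m + m * x.descFactorial (m-1) := by
  cases m with
  | zero => simp
  | succ m =>
    rw [Nat.succ_descFactorial_succ, Nat.descFactorial_succ]
    simp only [Nat.add_sub_cancel]
    rcases le_or_gt m x with h | h
    · have : x - m + (m + 1) = x + 1 := by omega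
      calc (x+1) * x.descFactorial m = (x - m + (m+1)) * x.descFactorial m := by rw [this]
        _ = (x-m) * x.descFactorial m + (m+1) * x.descFactorial m := by ring
    · have h0 : x.descFactorial m = 0 := Nat.descFactorial_eq_zero_iff_lt.mpr h
      simp [h0]

lemma fingerprint_cons {N n : ℕ} (i0 : Fin n) (s : Fin N → Fin n) (i : Fin n) :
    fingerprint (Fin.cons i0 s) i = (if i0 = i then 1 else 0) + fingerprint s i := by
  simp only [fingerprint, Finset.card_filter]
  rw [Fin.sum_univ_succ]
  simp [Fin.cons_succ]

lemma descprod_cons {n N : ℕ} (m : Fin n → ℕ) (i0 : Fin n) (s : Fin N → Fin n) :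
    ∏ i, ((fingerprint (Fin.cons i0 s) i).descFactorial (m i) : ℝ)
    = ∏ i, ((fingerprint s i).descFactorial (m i) : ℝ)
      + (m i0 : ℝ) * ∏ i, ((fingerprint s i).descFactorial (Function.update m i0 (m i0 - 1) i) : ℝ) := by
  rw [← Finset.mul_prod_erase univ _ (Finset.mem_univ i0),
      ← Finset.mul_prod_erase univ (fun i => ((fingerprint s i).descFactorial (m i) : ℝ)) (Finset.mem_univ i0),
      ← Finset.mul_prod_erase univ (fun i => ((fingerprint s i).descFactorial (Function.update m i0 (m i0 - 1) i) : ℝ)) (Finset.mem_univ i0)]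
  have he1 : ∀ i ∈ univ.erase i0,
      ((fingerprint (Fin.cons i0 s) i).descFactorial (m i) : ℝ)
      = ((fingerprint s i).descFactorial (m i) : ℝ) := by
    intro i hi
    rw [fingerprint_cons, if_neg (Finset.ne_of_mem_erase hi).symm]
    norm_num
  have he2 : ∀ i ∈ univ.erase i0,
      ((fingerprint s i).descFactorial (Function.update m i0 (m i0 - 1) i) : ℝ)
      = ((fingerprint s i).descFactorial (m i) : ℝ) := by
    intro i hi
    rw [Function.update_of_ne (Finset.ne_of_mem_erase hi)]
  rw [Finset.prod_congr rfl he1, Finset.prod_congr rfl he2]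
  have hc : fingerprint (Fin.cons i0 s) i0 = fingerprint s i0 + 1 := by
    rw [fingerprint_cons, if_pos rfl]; omega
  rw [hc, descFactorial_succ_left, Function.update_self]
  push_cast
  ring

lemma expect_descFactorial {n : ℕ} (p : Fin n → ℝ) (hp1 : ∑ i, p i = 1) :
    ∀ (N : ℕ) (m : Fin n → ℕ),
    ∑ s : Fin N → Fin n, (∏ j, p (s j)) * ∏ i, ((fingerprint s i).descFactorial (m i) : ℝ)
    = (N.descFactorial (∑ i, m i) : ℝ) * ∏ i, p i ^ (m i) := by
  intro N
  induction N with
  | zero =>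
    intro m
    have hfp : ∀ (s : Fin 0 → Fin n) i, fingerprint s i = 0 := by
      intro s i; simp [fingerprint]
    by_cases hm : ∀ i, m i = 0
    · simp [hfp, hm]
    · push_neg at hm
      obtain ⟨i0, hi0⟩ := hm
      have h1 : ∀ s : Fin 0 → Fin n, ∏ i, ((fingerprint s i).descFactorial (m i) : ℝ) = 0 := by
        intro s
        apply Finset.prod_eq_zero (Finset.mem_univ i0)
        rw [hfp]
        have : (0:ℕ).descFactorial (m i0) = 0 :=
          Nat.descFactorial_eq_zero_iff_lt.mpr (by omega)
        simp [this]
      have h2 : (Nat.descFactorial 0 (∑ i, m i) : ℝ) = 0 := by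
        have : (0:ℕ).descFactorial (∑ i, m i) = 0 :=
          Nat.descFactorial_eq_zero_iff_lt.mpr
            (Nat.lt_of_lt_of_le (by omega) (Finset.single_le_sum (f := m) (by intro i _; omega) (Finset.mem_univ i0)))
        simp [this]
    
      simp [h1, h2]
  | succ N ih =>
    intro m
    have hre : ∑ s : Fin (N+1) → Fin n, (∏ j, p (s j)) * ∏ i, ((fingerprint s i).descFactorial (m i) : ℝ)
        = ∑ i0 : Fin n, ∑ s : Fin N → Fin n,
            (∏ j : Fin (N+1), p (Fin.cons (α := fun _ => Fin n) i0 s j)) *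
              ∏ i, ((fingerprint (Fin.cons (α := fun _ => Fin n) i0 s) i).descFactorial (m i) : ℝ) := by
      calc ∑ s : Fin (N+1) → Fin n, (∏ j, p (s j)) * ∏ i, ((fingerprint s i).descFactorial (m i) : ℝ)
          = ∑ x : Fin n × (Fin N → Fin n),
              (∏ j : Fin (N+1), p (Fin.cons (α := fun _ => Fin n) x.1 x.2 j)) *
                ∏ i, ((fingerprint (Fin.cons (α := fun _ => Fin n) x.1 x.2) i).descFactorial (m i) : ℝ) :=
            (Fintype.sum_equiv (Fin.consEquiv fun _ => Fin n)
              (fun x => (∏ j : Fin (N+1), p (Fin.cons (α := fun _ => Fin n) x.1 x.2 j)) *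
                ∏ i, ((fingerprint (Fin.cons (α := fun _ => Fin n) x.1 x.2) i).descFactorial (m i) : ℝ))
              (fun s => (∏ j, p (s j)) * ∏ i, ((fingerprint s i).descFactorial (m i) : ℝ))
              (fun x => rfl)).symm
        _ = _ := Fintype.sum_prod_type _
    rw [hre]
    have hterm : ∀ i0 : Fin n, ∀ s : Fin N → Fin n,
        (∏ j : Fin (N+1), p (Fin.cons (α := fun _ => Fin n) i0 s j)) *
          ∏ i, ((fingerprint (Fin.cons (α := fun _ => Fin n) i0 s) i).descFactorial (m i) : ℝ)
        = p i0 * ((∏ j, p (s j)) * ∏ i, ((fingerprint s i).descFactorial (m i) : ℝ))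
          + (m i0 : ℝ) * p i0 * ((∏ j, p (s j)) *
              ∏ i, ((fingerprint s i).descFactorial (Function.update m i0 (m i0 - 1) i) : ℝ)) := by
      intro i0 s
      have hw : ∏ j : Fin (N+1), p (Fin.cons (α := fun _ => Fin n) i0 s j) = p i0 * ∏ j, p (s j) := by
        rw [Fin.prod_univ_succ]; simp
      rw [hw, descprod_cons]
      ring
    simp only [hterm, Finset.sum_add_distrib, ← Finset.mul_sum]
    simp only [ih]
    have hupd : ∀ i0 : Fin n,
        (m i0 : ℝ) * p i0 * ((Nat.descFactorial N (∑ i, Function.update m i0 (m i0 - 1) i) : ℝ) *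
            ∏ i, p i ^ (Function.update m i0 (m i0 - 1) i))
        = (m i0 : ℝ) * ((N.descFactorial ((∑ i, m i) - 1) : ℝ) * ∏ i, p i ^ (m i)) := by
      intro i0
      rcases Nat.eq_zero_or_pos (m i0) with h0 | hpos
      · simp [h0]
      · have hsum' : (∑ i, Function.update m i0 (m i0 - 1) i) = (∑ i, m i) - 1 := by
          rw [Finset.sum_update_of_mem (Finset.mem_univ i0)]
          have : ∑ i, m i = m i0 + ∑ i ∈ univ.erase i0, m i := by
            rw [Finset.add_sum_erase univ m (Finset.mem_univ i0)]
          rw [Finset.sdiff_singleton_eq_erase]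
          omega
        have hP : p i0 * ∏ i, p i ^ (Function.update m i0 (m i0 - 1) i) = ∏ i, p i ^ (m i) := by
          rw [← Finset.mul_prod_erase univ (fun i => p i ^ (Function.update m i0 (m i0 - 1) i)) (Finset.mem_univ i0),
              ← Finset.mul_prod_erase univ (fun i => p i ^ (m i)) (Finset.mem_univ i0)]
          have he : ∀ i ∈ univ.erase i0, p i ^ (Function.update m i0 (m i0 - 1) i) = p i ^ (m i) := by
            intro i hi; rw [Function.update_of_ne (Finset.ne_of_mem_erase hi)]
          rw [Finset.prod_congr rfl he, Function.update_self, ← mul_assoc, ← pow_succ']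
          have hmm : m i0 - 1 + 1 = m i0 := Nat.succ_pred_eq_of_pos hpos
          rw [hmm]
        rw [hsum', ← hP]
        ring
    simp only [hupd]
    rw [← Finset.sum_mul, hp1, one_mul, ← Finset.sum_mul]
    have hcast : ∑ i0 : Fin n, (m i0 : ℝ) = ((∑ i, m i : ℕ) : ℝ) := by push_cast; rfl
    rw [hcast, descFactorial_succ_left N (∑ i, m i)]
    push_cast
    ring

lemma descFactorial_sub_helper (x a b k : ℕ) (hk : k ≤ a) :
    (x - b) * x.descFactorial (a + b - k)
    = x.descFactorial (a + b + 1 - k) + (a - k) * x.descFactorial (a + b - k) := by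
  have h1 : a + b + 1 - k = (a + b - k) + 1 := by omega
  rw [h1, Nat.descFactorial_succ]
  rcases le_or_gt (a + b - k) x with h | h
  · have : x - b = (x - (a + b - k)) + (a - k) := by omega
    rw [this, Nat.add_mul]
  · have h0 : x.descFactorial (a + b - k) = 0 := Nat.descFactorial_eq_zero_iff_lt.mpr h
    simp [h0]

lemma descFactorial_vandermonde (x a : ℕ) : ∀ b : ℕ,
    x.descFactorial a * x.descFactorial b
    = ∑ k ∈ range (a+1), a.choose k * b.choose k * k.factorial * x.descFactorial (a + b - k) := by
  intro b
  induction b with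
  | zero =>
    rw [Finset.sum_eq_single_of_mem 0 (Finset.mem_range.mpr (by omega))]
    · simp
    · intro k _ hk
      have : Nat.choose 0 k = 0 := Nat.choose_eq_zero_of_lt (by omega)
      simp [this]
  | succ b ih =>
    rw [Nat.descFactorial_succ, ← Nat.mul_assoc, Nat.mul_comm (x.descFactorial a) (x - b),
        Nat.mul_assoc, ih, Finset.mul_sum]
    have hterm : ∀ k ∈ range (a+1),
        (x - b) * (a.choose k * b.choose k * k.factorial * x.descFactorial (a + b - k))
        = a.choose k * b.choose k * k.factorial * x.descFactorial (a + b + 1 - k)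
          + a.choose k * b.choose k * k.factorial * (a - k) * x.descFactorial (a + b - k) := by
      intro k hk
      have hk' : k ≤ a := by simpa using Nat.lt_succ_iff.mp (Finset.mem_range.mp hk)
      calc (x - b) * (a.choose k * b.choose k * k.factorial * x.descFactorial (a + b - k))
          = a.choose k * b.choose k * k.factorial * ((x - b) * x.descFactorial (a + b - k)) := by ring
        _ = _ := by rw [descFactorial_sub_helper x a b k hk']; ring
    rw [Finset.sum_congr rfl hterm, Finset.sum_add_distrib]
    have hpascal : ∀ k ∈ range (a+1),
        a.choose k * (b+1).choose k * k.factorial * x.descFactorial (a + (b+1) - k)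
        = a.choose k * b.choose k * k.factorial * x.descFactorial (a + b + 1 - k)
          + a.choose k * (if k = 0 then 0 else b.choose (k-1)) * k.factorial * x.descFactorial (a + b + 1 - k) := by
      intro k _
      cases k with
      | zero =>
        have h : a + (b+1) - 0 = a + b + 1 - 0 := by omega
        rw [h]; simp
      | succ j =>
        have : (b+1).choose (j+1) = b.choose j + b.choose (j+1) := by
          rw [Nat.choose_succ_succ]
        simp only [this, if_neg (Nat.succ_ne_zero j)]
        have : j + 1 - 1 = j := rfl
        rw [this]; ring
    rw [Finset.sum_congr rfl hpascal, Finset.sum_add_distrib]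
    congr 1
    -- remaining: ∑ (a-k) terms = ∑ shifted terms
    rw [Finset.sum_range_succ, Finset.sum_range_succ']
    have hz : a.choose a * b.choose a * a.factorial * (a - a) * x.descFactorial (a + b - a) = 0 := by
      simp
    rw [hz, Nat.add_zero]
    have hz2 : (a.choose 0 * if (0:ℕ) = 0 then 0 else b.choose (0-1)) * Nat.factorial 0 * x.descFactorial (a + b + 1 - 0) = 0 := by
      simp
    rw [hz2, Nat.add_zero]
    apply Finset.sum_congr rfl
    intro j hj
    have hj' : j < a := Finset.mem_range.mp hj
    simp only [if_neg (Nat.succ_ne_zero j), Nat.add_sub_cancel]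
    have h2 : a + b + 1 - (j+1) = a + b - j := by omega
    rw [h2]
    have h3 : a.choose (j+1) * (j+1).factorial = a.choose j * (a - j) * j.factorial := by
      rw [Nat.factorial_succ, ← Nat.mul_assoc, Nat.choose_succ_right_eq]
    symm
    calc a.choose (j+1) * b.choose j * (j+1).factorial * x.descFactorial (a + b - j)
        = (a.choose (j+1) * (j+1).factorial) * b.choose j * x.descFactorial (a + b - j) := by ring
      _ = (a.choose j * (a-j) * j.factorial) * b.choose j * x.descFactorial (a + b - j) := by rw [h3]
      _ = a.choose j * b.choose j * j.factorial * (a - j) * x.descFactorial (a + b - j) := by ring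

lemma pow_pderiv_monomial {n : ℕ} (i : Fin n) (m : ℕ) (α : Fin n →₀ ℕ) (c : ℝ) :
    (((MvPolynomial.pderiv i).toLinearMap) ^ m) (MvPolynomial.monomial α c)
    = ((α i).descFactorial m : ℝ) • MvPolynomial.monomial (α - Finsupp.single i m) c := by
  induction m with
  | zero => simp
  | succ m ih =>
    rw [pow_succ', Module.End.mul_apply, ih, map_smul]
    have h1 : ((MvPolynomial.pderiv i).toLinearMap) (MvPolynomial.monomial (α - Finsupp.single i m) c)
        = MvPolynomial.monomial (α - Finsupp.single i m - Finsupp.single i 1) (c * ((α - Finsupp.single i m) i)) := by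
      exact MvPolynomial.pderiv_monomial
    rw [h1]
    have h2 : α - Finsupp.single i m - Finsupp.single i 1 = α - Finsupp.single i (m+1) := by
      rw [tsub_tsub, ← Finsupp.single_add]
    have h3 : ((α - Finsupp.single i m) i : ℕ) = α i - m := by
      simp [Finsupp.tsub_apply]
    rw [h2, h3, Nat.descFactorial_succ]
    rw [MvPolynomial.smul_monomial, MvPolynomial.smul_monomial]
    congr 1
    simp only [smul_eq_mul]
    push_cast
    ring

lemma foldr_pderiv_monomial {n : ℕ} (s : Fin n → ℕ) (c : ℝ) :
    ∀ (l : List (Fin n)), l.Nodup → ∀ (α : Fin n →₀ ℕ),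
    l.foldr (fun i acc => (((MvPolynomial.pderiv i).toLinearMap) ^ (s i)) acc)
      (MvPolynomial.monomial α c)
    = ((l.map (fun i => ((α i).descFactorial (s i) : ℝ))).prod) •
        MvPolynomial.monomial (α - (l.map (fun i => Finsupp.single i (s i))).sum) c := by
  intro l
  induction l with
  | nil => intro _ α; simp
  | cons i l ih =>
    intro hnd α
    have hi : i ∉ l := (List.nodup_cons.mp hnd).1
    have hnd' : l.Nodup := (List.nodup_cons.mp hnd).2
    rw [List.foldr_cons, ih hnd' α, map_smul, pow_pderiv_monomial]
    have hσ : ((l.map (fun j => Finsupp.single j (s j))).sum) i = 0 := by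
      rw [← Finsupp.applyAddHom_apply, map_list_sum, List.map_map]
      apply List.sum_eq_zero
      intro x hx
      simp only [List.mem_map] at hx
      obtain ⟨j, hj, rfl⟩ := hx
      have : j ≠ i := fun h => hi (h ▸ hj)
      simp [Finsupp.applyAddHom_apply, Finsupp.single_apply, this]
    have hcoe : (α - (l.map (fun j => Finsupp.single j (s j))).sum) i = α i := by
      rw [Finsupp.tsub_apply, hσ, Nat.sub_zero]
    rw [hcoe]
    have hexp : α - (l.map (fun j => Finsupp.single j (s j))).sum - Finsupp.single i (s i)
        = α - ((i :: l).map (fun j => Finsupp.single j (s j))).sum := by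
      rw [tsub_tsub, List.map_cons, List.sum_cons, add_comm]
    rw [hexp]
    rw [List.map_cons (f := fun i => ((α i).descFactorial (s i) : ℝ)), List.prod_cons, smul_smul, mul_comm]

lemma foldr_pderiv_sum {n : ℕ} (s : Fin n → ℕ) (l : List (Fin n)) {ι : Type*} (t : Finset ι)
    (f : ι → MvPolynomial (Fin n) ℝ) :
    l.foldr (fun i acc => (((MvPolynomial.pderiv i).toLinearMap) ^ (s i)) acc) (∑ x ∈ t, f x)
    = ∑ x ∈ t, l.foldr (fun i acc => (((MvPolynomial.pderiv i).toLinearMap) ^ (s i)) acc) (f x) := by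
  induction l with
  | nil => simp
  | cons i l ih => rw [List.foldr_cons, ih, map_sum]; rfl

lemma eval_iterPderiv {n : ℕ} (s : Fin n → ℕ) (Q : MvPolynomial (Fin n) ℝ) (p : Fin n → ℝ) :
    MvPolynomial.eval p (iterPderiv s Q)
    = ∑ α ∈ Q.support, Q.coeff α * (∏ i, ((α i).descFactorial (s i) : ℝ))
        * ∏ i, p i ^ (α i - s i) := by
  conv_lhs => rw [iterPderiv, MvPolynomial.as_sum Q, foldr_pderiv_sum, map_sum]
  apply Finset.sum_congr rfl
  intro α _
  rw [foldr_pderiv_monomial s _ _ (List.nodup_finRange n) α]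
  rw [MvPolynomial.smul_eval, MvPolynomial.eval_monomial]
  have hD : ((List.finRange n).map (fun i => ((α i).descFactorial (s i) : ℝ))).prod
      = ∏ i, ((α i).descFactorial (s i) : ℝ) := by
    rw [Fin.prod_univ_def]
  have hσ : ∀ j, (((List.finRange n).map (fun i => Finsupp.single i (s i))).sum) j = s j := by
    intro j
    have : ((List.finRange n).map (fun i => Finsupp.single i (s i))).sum
        = ∑ i : Fin n, Finsupp.single i (s i) := by rw [Fin.sum_univ_def]
    rw [this, Finsupp.finset_sum_apply]
    rw [Finset.sum_eq_single j]
    · simp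
    · intro b _ hb; simp [Finsupp.single_apply, hb]
    · intro h; exact absurd (Finset.mem_univ j) h
  have hprod : (α - ((List.finRange n).map (fun i => Finsupp.single i (s i))).sum).prod
      (fun i e => p i ^ e) = ∏ i, p i ^ (α i - s i) := by
    rw [Finsupp.prod_fintype]
    · apply Finset.prod_congr rfl
      intro i _
      rw [Finsupp.tsub_apply, hσ]
    · intro i; rfl
  rw [hD, hprod]
  ring

lemma estU_eq {n : ℕ} (N d : ℕ) (Q : MvPolynomial (Fin n) ℝ) (φ : Fin n → ℕ) :
    estU N d Q φ = ((N-d).factorial : ℝ) / (N.factorial : ℝ) *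
      ∑ α ∈ Q.support, Q.coeff α * ∏ i, ((φ i).descFactorial (α i) : ℝ) := by
  rw [estU, Finset.mul_sum]
  apply Finset.sum_congr rfl
  intro α _
  have h : ∏ i, ((φ i).descFactorial (α i) : ℝ)
      = (∏ i, ((α i).factorial : ℝ)) * ∏ i, ((φ i).choose (α i) : ℝ) := by
    rw [← Finset.prod_mul_distrib]
    apply Finset.prod_congr rfl
    intro i _
    rw [← Nat.cast_mul, ← Nat.descFactorial_eq_factorial_mul_choose]
  rw [h]
  ring

lemma vand_ext (x a b D : ℕ) (ha : a ≤ D) :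
    (x.descFactorial a : ℝ) * (x.descFactorial b : ℝ)
    = ∑ k ∈ range (D+1), ((a.choose k : ℝ) * (b.choose k : ℝ) * ((k).factorial : ℝ))
        * (x.descFactorial (a + b - k) : ℝ) := by
  have h := descFactorial_vandermonde x a b
  have h2 : ∑ k ∈ range (D+1), ((a.choose k : ℝ) * (b.choose k : ℝ) * ((k).factorial : ℝ))
        * (x.descFactorial (a + b - k) : ℝ)
      = ∑ k ∈ range (a+1), ((a.choose k : ℝ) * (b.choose k : ℝ) * ((k).factorial : ℝ))
        * (x.descFactorial (a + b - k) : ℝ) := by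
    symm
    apply Finset.sum_subset
    · intro k hk
      simp only [Finset.mem_range] at *
      omega
    · intro k _ hk
      simp only [Finset.mem_range] at hk
      have : a.choose k = 0 := Nat.choose_eq_zero_of_lt (by omega)
      simp [this]
  rw [h2, ← Nat.cast_mul, h]
  push_cast
  rfl

lemma expect_prod_two {n : ℕ} (p : Fin n → ℝ) (hp1 : ∑ i, p i = 1) (N D : ℕ)
    (a b : Fin n → ℕ) (ha : ∀ i, a i ≤ D) :
    ∑ s : Fin N → Fin n, (∏ j, p (s j)) *
      ((∏ i, ((fingerprint s i).descFactorial (a i) : ℝ)) *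
       (∏ i, ((fingerprint s i).descFactorial (b i) : ℝ)))
    = ∑ k ∈ Fintype.piFinset (fun _ : Fin n => range (D+1)),
        (∏ i, ((a i).choose (k i) : ℝ) * ((b i).choose (k i) : ℝ) * ((k i).factorial : ℝ))
        * ((N.descFactorial (∑ i, (a i + b i - k i)) : ℝ) * ∏ i, p i ^ (a i + b i - k i)) := by
  have hpoint : ∀ s : Fin N → Fin n,
      (∏ i, ((fingerprint s i).descFactorial (a i) : ℝ)) *
       (∏ i, ((fingerprint s i).descFactorial (b i) : ℝ))
      = ∑ k ∈ Fintype.piFinset (fun _ : Fin n => range (D+1)),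
          (∏ i, ((a i).choose (k i) : ℝ) * ((b i).choose (k i) : ℝ) * ((k i).factorial : ℝ))
          * ∏ i, ((fingerprint s i).descFactorial (a i + b i - k i) : ℝ) := by
    intro s
    rw [← Finset.prod_mul_distrib]
    have h1 : ∀ i : Fin n, ((fingerprint s i).descFactorial (a i) : ℝ) *
        ((fingerprint s i).descFactorial (b i) : ℝ)
        = ∑ k ∈ range (D+1), (((a i).choose k : ℝ) * ((b i).choose k : ℝ) * ((k).factorial : ℝ))
            * ((fingerprint s i).descFactorial (a i + b i - k) : ℝ) :=
      fun i => vand_ext (fingerprint s i) (a i) (b i) D (ha i)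
    rw [Finset.prod_congr rfl (fun i _ => h1 i), Finset.prod_univ_sum]
    apply Finset.sum_congr rfl
    intro k _
    rw [← Finset.prod_mul_distrib]
  calc ∑ s : Fin N → Fin n, (∏ j, p (s j)) *
      ((∏ i, ((fingerprint s i).descFactorial (a i) : ℝ)) *
       (∏ i, ((fingerprint s i).descFactorial (b i) : ℝ)))
      = ∑ s : Fin N → Fin n, ∑ k ∈ Fintype.piFinset (fun _ : Fin n => range (D+1)),
          (∏ i, ((a i).choose (k i) : ℝ) * ((b i).choose (k i) : ℝ) * ((k i).factorial : ℝ))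
          * ((∏ j, p (s j)) * ∏ i, ((fingerprint s i).descFactorial (a i + b i - k i) : ℝ)) := by
        apply Finset.sum_congr rfl
        intro s _
        rw [hpoint s, Finset.mul_sum]
        apply Finset.sum_congr rfl
        intro k _
        ring
    _ = ∑ k ∈ Fintype.piFinset (fun _ : Fin n => range (D+1)),
          (∏ i, ((a i).choose (k i) : ℝ) * ((b i).choose (k i) : ℝ) * ((k i).factorial : ℝ))
          * ∑ s : Fin N → Fin n, ((∏ j, p (s j)) *
              ∏ i, ((fingerprint s i).descFactorial (a i + b i - k i) : ℝ)) := by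
        rw [Finset.sum_comm]
        apply Finset.sum_congr rfl
        intro k _
        rw [Finset.mul_sum]
    _ = _ := by
        apply Finset.sum_congr rfl
        intro k _
        rw [expect_descFactorial p hp1 N (fun i => a i + b i - k i)]

lemma support_sum_eq {n d : ℕ} {Q : MvPolynomial (Fin n) ℝ} (hQ : Q.IsHomogeneous d)
    {α : Fin n →₀ ℕ} (hα : α ∈ Q.support) : ∑ i, α i = d := by
  have h := hQ (MvPolynomial.mem_support_iff.mp hα)
  rw [Finsupp.weight_apply, Finsupp.sum_fintype] at h
  · rw [← h]
    apply Finset.sum_congr rfl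
    intro i _
    simp
  · intro i; simp

lemma sum_fin_pi {n D : ℕ} (G : (Fin n → ℕ) → ℝ) :
    ∑ t : Fin n → Fin (D+1), G (fun i => (t i : ℕ))
    = ∑ k ∈ Fintype.piFinset (fun _ : Fin n => range (D+1)), G k := by
  apply Finset.sum_nbij' (i := fun t => fun i => (t i : ℕ))
    (j := fun k => fun i => (⟨k i % (D+1), Nat.mod_lt _ (Nat.succ_pos D)⟩ : Fin (D+1)))
  · intro t _
    rw [Fintype.mem_piFinset]
    intro i
    exact Finset.mem_range.mpr (t i).isLt
  · intro k _; exact Finset.mem_univ _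
  · intro t _
    funext i
    exact Fin.ext (Nat.mod_eq_of_lt (t i).isLt)
  · intro k hk
    funext i
    have : k i < D + 1 := Finset.mem_range.mp (Fintype.mem_piFinset.mp hk i)
    exact Nat.mod_eq_of_lt this
  · intro t _; rfl

lemma sum_tsub_fin {n : ℕ} (f g : Fin n → ℕ) (h : ∀ i, g i ≤ f i) :
    ∑ i, (f i - g i) = ∑ i, f i - ∑ i, g i := by
  have h1 : ∑ i, (f i - g i) + ∑ i, g i = ∑ i, f i := by
    rw [← Finset.sum_add_distrib]
    apply Finset.sum_congr rfl
    intro i _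
    have := h i
    omega
  omega


theorem stmt14 {n : ℕ} (d N : ℕ) (hN : d ≤ N)
    (Q : MvPolynomial (Fin n) ℝ) (hQ : Q.IsHomogeneous d)
    (p : Fin n → ℝ) (hp0 : ∀ i, 0 ≤ p i) (hp1 : ∑ i, p i = 1) :
    ∑ s : Fin N → Fin n, (∏ j, p (s j)) * (estU N d Q (fingerprint s)) ^ 2
    = ∑ t : Fin n → Fin (d + 1),
        if 2 * d - N ≤ ∑ i, (t i : ℕ) ∧ ∑ i, (t i : ℕ) ≤ d then
          (∏ i, p i ^ (t i : ℕ)) *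
            (MvPolynomial.eval p (iterPderiv (fun i => (t i : ℕ)) Q)) ^ 2 *
            ((N - d).factorial : ℝ) ^ 2 /
            ((N.factorial : ℝ) * ((N + ∑ i, (t i : ℕ) - 2 * d).factorial : ℝ) *
              ∏ i, (((t i : ℕ)).factorial : ℝ))
        else 0 := by
  classical
  have hdeg : ∀ α ∈ Q.support, ∑ i, α i = d := fun α hα => support_sum_eq hQ hα
  have hbound : ∀ α ∈ Q.support, ∀ i, α i ≤ d := by
    intro α hα i
    rw [← hdeg α hα]
    exact Finset.single_le_sum (f := fun i => α i) (fun _ _ => Nat.zero_le _) (Finset.mem_univ i)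
  set S := Q.support with hS
  set piF := Fintype.piFinset (fun _ : Fin n => range (d+1)) with hpiF
  set c : (Fin n →₀ ℕ) → ℝ := fun α => Q.coeff α with hc
  have key : ∑ s : Fin N → Fin n, (∏ j, p (s j)) * (estU N d Q (fingerprint s)) ^ 2
      = ∑ k ∈ piF,
        if 2 * d - N ≤ ∑ i, k i ∧ ∑ i, k i ≤ d then
          (∏ i, p i ^ (k i)) *
            (MvPolynomial.eval p (iterPderiv k Q)) ^ 2 *
            ((N - d).factorial : ℝ) ^ 2 /
            ((N.factorial : ℝ) * ((N + ∑ i, k i - 2 * d).factorial : ℝ) *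
              ∏ i, ((k i).factorial : ℝ))
        else 0 := by
    -- Step 1: expand the square
    have hL1 : ∀ s : Fin N → Fin n,
        (∏ j, p (s j)) * (estU N d Q (fingerprint s))^2
        = ∑ α ∈ S, ∑ β ∈ S,
            (c α * c β * (((N-d).factorial : ℝ)/(N.factorial : ℝ))^2) *
              ((∏ j, p (s j)) * ((∏ i, ((fingerprint s i).descFactorial (α i) : ℝ)) *
                (∏ i, ((fingerprint s i).descFactorial (β i) : ℝ)))) := by
      intro s
      rw [estU_eq, mul_pow, pow_two (∑ α ∈ Q.support, Q.coeff α * ∏ i, ((fingerprint s i).descFactorial (α i) : ℝ)),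
          Finset.sum_mul_sum]
      simp only [Finset.mul_sum]
      apply Finset.sum_congr rfl
      intro α _
      apply Finset.sum_congr rfl
      intro β _
      ring
    rw [Finset.sum_congr rfl (fun s _ => hL1 s)]
    rw [Finset.sum_comm]
    have hL2 : ∀ α ∈ S,
        ∑ s : Fin N → Fin n, ∑ β ∈ S,
            (c α * c β * (((N-d).factorial : ℝ)/(N.factorial : ℝ))^2) *
              ((∏ j, p (s j)) * ((∏ i, ((fingerprint s i).descFactorial (α i) : ℝ)) *
                (∏ i, ((fingerprint s i).descFactorial (β i) : ℝ))))
        = ∑ β ∈ S, ∑ k ∈ piF,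
            (c α * c β * (((N-d).factorial : ℝ)/(N.factorial : ℝ))^2) *
              ((∏ i, ((α i).choose (k i) : ℝ) * ((β i).choose (k i) : ℝ) * ((k i).factorial : ℝ))
               * ((N.descFactorial (∑ i, (α i + β i - k i)) : ℝ) * ∏ i, p i ^ (α i + β i - k i))) := by
      intro α hα
      rw [Finset.sum_comm]
      apply Finset.sum_congr rfl
      intro β _
      rw [← Finset.mul_sum, expect_prod_two p hp1 N d (fun i => α i) (fun i => β i) (hbound α hα),
          Finset.mul_sum]
    rw [Finset.sum_congr rfl hL2]
    -- swap k to the outside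
    rw [Finset.sum_comm]
    have hL3 : ∀ β ∈ S, ∑ α ∈ S, ∑ k ∈ piF,
            (c α * c β * (((N-d).factorial : ℝ)/(N.factorial : ℝ))^2) *
              ((∏ i, ((α i).choose (k i) : ℝ) * ((β i).choose (k i) : ℝ) * ((k i).factorial : ℝ))
               * ((N.descFactorial (∑ i, (α i + β i - k i)) : ℝ) * ∏ i, p i ^ (α i + β i - k i)))
        = ∑ k ∈ piF, ∑ α ∈ S,
            (c α * c β * (((N-d).factorial : ℝ)/(N.factorial : ℝ))^2) *
              ((∏ i, ((α i).choose (k i) : ℝ) * ((β i).choose (k i) : ℝ) * ((k i).factorial : ℝ))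
               * ((N.descFactorial (∑ i, (α i + β i - k i)) : ℝ) * ∏ i, p i ^ (α i + β i - k i))) :=
      fun β _ => Finset.sum_comm
    rw [Finset.sum_congr rfl hL3, Finset.sum_comm]
    -- per-k claim
    apply Finset.sum_congr rfl
    intro k _
    by_cases hcond : 2 * d - N ≤ ∑ i, k i ∧ ∑ i, k i ≤ d
    · rw [if_pos hcond, eval_iterPderiv]
      obtain ⟨hc1, hc2⟩ := hcond
      rw [pow_two (∑ α ∈ Q.support, Q.coeff α * (∏ i, ((α i).descFactorial (k i) : ℝ))
            * ∏ i, p i ^ (α i - k i)), Finset.sum_mul_sum]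
      simp only [Finset.mul_sum, Finset.sum_mul, Finset.sum_div]
      apply Finset.sum_congr rfl
      intro β hβ
      apply Finset.sum_congr rfl
      intro α hα
      by_cases hkab : ∀ i, k i ≤ α i ∧ k i ≤ β i
      · have hSg : ∑ i, (α i + β i - k i) = 2*d - ∑ i, k i := by
          rw [sum_tsub_fin (fun i => α i + β i) k (fun i => by show k i ≤ α i + β i; have := (hkab i).1; omega),
              Finset.sum_add_distrib, hdeg α hα, hdeg β hβ]
          omega
        have hle : 2*d - ∑ i, k i ≤ N := by omega
        have hidx : N - (2*d - ∑ i, k i) = N + ∑ i, k i - 2*d := by omega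
        have hfacN : N.descFactorial (2*d - ∑ i, k i) * (N + ∑ i, k i - 2*d).factorial
            = N.factorial := by
          rw [← hidx, Nat.mul_comm]
          exact Nat.factorial_mul_descFactorial hle
        have keyR : (N.descFactorial (2*d - ∑ i, k i) : ℝ)
            = (N.factorial : ℝ) / ((N + ∑ i, k i - 2*d).factorial : ℝ) := by
          rw [eq_div_iff (Nat.cast_ne_zero.mpr (Nat.factorial_ne_zero _))]
          exact_mod_cast hfacN
        have hP : ∏ i, p i ^ (α i + β i - k i)
            = (∏ i, p i ^ (k i)) * (∏ i, p i ^ (α i - k i)) * (∏ i, p i ^ (β i - k i)) := by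
          rw [← Finset.prod_mul_distrib, ← Finset.prod_mul_distrib]
          apply Finset.prod_congr rfl
          intro i _
          rw [← pow_add, ← pow_add]
          congr 1
          have h1 := (hkab i).1
          have h2 := (hkab i).2
          omega
        have hDα : ∏ i, ((α i).descFactorial (k i) : ℝ)
            = (∏ i, ((k i).factorial : ℝ)) * ∏ i, ((α i).choose (k i) : ℝ) := by
          rw [← Finset.prod_mul_distrib]
          apply Finset.prod_congr rfl
          intro i _
          rw [← Nat.cast_mul, ← Nat.descFactorial_eq_factorial_mul_choose]
        have hDβ : ∏ i, ((β i).descFactorial (k i) : ℝ)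
            = (∏ i, ((k i).factorial : ℝ)) * ∏ i, ((β i).choose (k i) : ℝ) := by
          rw [← Finset.prod_mul_distrib]
          apply Finset.prod_congr rfl
          intro i _
          rw [← Nat.cast_mul, ← Nat.descFactorial_eq_factorial_mul_choose]
        have hCC : ∏ i, (((α i).choose (k i) : ℝ) * ((β i).choose (k i) : ℝ) * ((k i).factorial : ℝ))
            = ((∏ i, ((α i).choose (k i) : ℝ)) * ∏ i, ((β i).choose (k i) : ℝ))
              * ∏ i, ((k i).factorial : ℝ) := by
          rw [← Finset.prod_mul_distrib, ← Finset.prod_mul_distrib]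
        have hPk : (∏ i, ((k i).factorial : ℝ)) ≠ 0 :=
          Finset.prod_ne_zero_iff.mpr
            (fun i _ => Nat.cast_ne_zero.mpr (Nat.factorial_ne_zero _))
        have hNf : (N.factorial : ℝ) ≠ 0 := Nat.cast_ne_zero.mpr (Nat.factorial_ne_zero _)
        have hF3 : ((N + ∑ i, k i - 2*d).factorial : ℝ) ≠ 0 :=
          Nat.cast_ne_zero.mpr (Nat.factorial_ne_zero _)
        rw [hSg, keyR, hP, hDα, hDβ, hCC]
        field_simp
        ring
      · push_neg at hkab
        obtain ⟨i, hi⟩ := hkab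
        have hzero : ((α i).choose (k i) : ℝ) * ((β i).choose (k i) : ℝ) * ((k i).factorial : ℝ) = 0 := by
          rcases le_or_gt (k i) (α i) with h | h
          · have : (β i).choose (k i) = 0 := Nat.choose_eq_zero_of_lt (hi h)
            simp [this]
          · have : (α i).choose (k i) = 0 := Nat.choose_eq_zero_of_lt h
            simp [this]
        rw [Finset.prod_eq_zero (Finset.mem_univ i) hzero]
        rcases le_or_gt (k i) (α i) with h | h
        · have h2 : ((β i).descFactorial (k i) : ℝ) = 0 := by
            have := Nat.descFactorial_eq_zero_iff_lt.mpr (hi h)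
            exact_mod_cast congrArg Nat.cast this
          rw [Finset.prod_eq_zero (f := fun i => ((β i).descFactorial (k i) : ℝ)) (Finset.mem_univ i) h2]
          simp
        · have h2 : ((α i).descFactorial (k i) : ℝ) = 0 := by
            have := Nat.descFactorial_eq_zero_iff_lt.mpr h
            exact_mod_cast congrArg Nat.cast this
          rw [Finset.prod_eq_zero (f := fun i => ((α i).descFactorial (k i) : ℝ)) (Finset.mem_univ i) h2]
          simp
    · rw [if_neg hcond]
      apply Finset.sum_eq_zero
      intro β hβ
      apply Finset.sum_eq_zero
      intro α hα
      by_cases hkab : ∀ i, k i ≤ α i ∧ k i ≤ β i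
      · have h1 : ∑ i, k i ≤ d := by
          rw [← hdeg α hα]
          exact Finset.sum_le_sum (fun i _ => (hkab i).1)
        have hA : ¬ (2*d - N ≤ ∑ i, k i) := fun hA => hcond ⟨hA, h1⟩
        have hSg : ∑ i, (α i + β i - k i) = 2*d - ∑ i, k i := by
          rw [sum_tsub_fin (fun i => α i + β i) k (fun i => by show k i ≤ α i + β i; have := (hkab i).1; omega),
              Finset.sum_add_distrib, hdeg α hα, hdeg β hβ]
          omega
        have hlt : N < ∑ i, (α i + β i - k i) := by omega
        rw [Nat.descFactorial_eq_zero_iff_lt.mpr hlt]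
        simp
      · push_neg at hkab
        obtain ⟨i, hi⟩ := hkab
        have hzero : ((α i).choose (k i) : ℝ) * ((β i).choose (k i) : ℝ) * ((k i).factorial : ℝ) = 0 := by
          rcases le_or_gt (k i) (α i) with h | h
          · have : (β i).choose (k i) = 0 := Nat.choose_eq_zero_of_lt (hi h)
            simp [this]
          · have : (α i).choose (k i) = 0 := Nat.choose_eq_zero_of_lt h
            simp [this]
        rw [Finset.prod_eq_zero (Finset.mem_univ i) hzero]
        simp
  rw [key]
  exact (sum_fin_pi (fun k =>
    if 2 * d - N ≤ ∑ i, k i ∧ ∑ i, k i ≤ d then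
      (∏ i, p i ^ (k i)) *
        (MvPolynomial.eval p (iterPderiv k Q)) ^ 2 *
        ((N - d).factorial : ℝ) ^ 2 /
        ((N.factorial : ℝ) * ((N + ∑ i, k i - 2 * d).factorial : ℝ) *
          ∏ i, ((k i).factorial : ℝ))
    else 0)).symm
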